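/- Let n ≥ 1, let V be a C¹ vector field on ℝⁿ, and let Y be a C¹ vector field on ℝⁿ with compact support. Then ∫ Σᵢ,ⱼ (S(Y)ᵢⱼ + (1/2)(div Y)δᵢⱼ) Yᵢ Vⱼ dx = −(1/2) ∫ ( Σᵢ,ⱼ Yᵢ Yⱼ ∂ᵢVⱼ + (1/2)(div V)|Y|² ) dx. -/

import Mathlib

open MeasureTheory Real

/-- The `i`-th partial derivative of a function on `ℝⁿ`. -/
noncomputable def pd (n : ℕ) (f : EuclideanSpace ℝ (Fin n) → ℝ)
    (i : Fin n) (x : EuclideanSpace ℝ (Fin n)) : ℝ :=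
  fderiv ℝ f x (EuclideanSpace.single i 1)

/-- The squared Euclidean norm of the gradient, `|∇f|² = Σᵢ (∂ᵢf)²`. -/
noncomputable def gradSq (n : ℕ) (f : EuclideanSpace ℝ (Fin n) → ℝ)
    (x : EuclideanSpace ℝ (Fin n)) : ℝ :=
  ∑ i, (pd n f i x) ^ 2

/-- The Euclidean Laplacian, `Δf = Σᵢ ∂ᵢ²f`. -/
noncomputable def lap (n : ℕ) (f : EuclideanSpace ℝ (Fin n) → ℝ)
    (x : EuclideanSpace ℝ (Fin n)) : ℝ :=
  ∑ i, pd n (pd n f i) i x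

/-- The partial derivative `∂ᵢYⱼ` of a vector field `Y` on `ℝⁿ`. -/
noncomputable def vpd (n : ℕ)
    (Y : EuclideanSpace ℝ (Fin n) → EuclideanSpace ℝ (Fin n))
    (i j : Fin n) (x : EuclideanSpace ℝ (Fin n)) : ℝ :=
  fderiv ℝ (fun y => Y y j) x (EuclideanSpace.single i 1)

/-- The symmetrized gradient `S(Y)ᵢⱼ = (∂ᵢYⱼ + ∂ⱼYᵢ)/2` of a vector field. -/
noncomputable def symGrad (n : ℕ)
    (Y : EuclideanSpace ℝ (Fin n) → EuclideanSpace ℝ (Fin n))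
    (i j : Fin n) (x : EuclideanSpace ℝ (Fin n)) : ℝ :=
  (vpd n Y i j x + vpd n Y j i x) / 2

/-- The divergence `div Y = Σᵢ ∂ᵢYᵢ` of a vector field on `ℝⁿ`. -/
noncomputable def diverg (n : ℕ)
    (Y : EuclideanSpace ℝ (Fin n) → EuclideanSpace ℝ (Fin n))
    (x : EuclideanSpace ℝ (Fin n)) : ℝ :=
  ∑ i, vpd n Y i i x

theorem fderiv_zero_outside (n : ℕ) (f : EuclideanSpace ℝ (Fin n) → ℝ)
    {x : EuclideanSpace ℝ (Fin n)} (hx : x ∉ tsupport f) : fderiv ℝ f x = 0 := by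
  by_contra h
  exact hx (support_fderiv_subset ℝ (by simpa [Function.mem_support] using h))

theorem fderiv_integrable (n : ℕ) (f : EuclideanSpace ℝ (Fin n) → ℝ) (hf : ContDiff ℝ 1 f)
    (hs : HasCompactSupport f) (v : EuclideanSpace ℝ (Fin n)) :
    Integrable (fun x => fderiv ℝ f x v) volume := by
  apply Continuous.integrable_of_hasCompactSupport
  · exact ((ContinuousLinearMap.apply ℝ ℝ v).continuous).comp
      ((hf.fderiv_right (m := 0) (le_refl 1)).continuous)
  · exact HasCompactSupport.intro hs fun x hx => by
      rw [fderiv_zero_outside n f hx]; rfl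

theorem key_ibp (n : ℕ) (f : EuclideanSpace ℝ (Fin n) → ℝ) (hf : ContDiff ℝ 1 f)
    (hs : HasCompactSupport f) (v : EuclideanSpace ℝ (Fin n)) :
    ∫ x, fderiv ℝ f x v = 0 := by
  have h2 : Integrable f volume := hf.continuous.integrable_of_hasCompactSupport hs
  have h := integral_mul_fderiv_eq_neg_fderiv_mul_of_integrable
    (f := fun _ : EuclideanSpace ℝ (Fin n) => (1:ℝ)) (g := f) (v := v) (μ := volume)
    (by simpa using (integrable_zero (EuclideanSpace ℝ (Fin n)) ℝ
      (volume : Measure (EuclideanSpace ℝ (Fin n)))))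
    (by simpa using fderiv_integrable n f hf hs v) (by simpa using h2)
    (fun x _ => differentiableAt_const 1) (fun x _ => (hf.differentiable one_ne_zero).differentiableAt)
  simpa using h

theorem double_sum_swap_trick {n : ℕ} (L R : Fin n → Fin n → ℝ)
    (h : ∀ i j, L i j + L j i = R i j + R j i) :
    ∑ i, ∑ j, L i j = ∑ i, ∑ j, R i j := by
  have h2 : ∑ i, ∑ j, (L i j + L j i) = ∑ i, ∑ j, (R i j + R j i) :=
    Finset.sum_congr rfl fun i _ => Finset.sum_congr rfl fun j _ => h i j
  simp only [Finset.sum_add_distrib] at h2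
  have hL : ∑ i, ∑ j, L j i = ∑ i, ∑ j, L i j := by rw [Finset.sum_comm]
  have hR : ∑ i, ∑ j, R j i = ∑ i, ∑ j, R i j := by rw [Finset.sum_comm]
  rw [hL, hR] at h2
  linarith

theorem alg (n : ℕ) (P Q : Fin n → Fin n → ℝ) (a b : Fin n → ℝ) :
    (∑ i, ∑ j, ((P i j + P j i)/2 + (1/2) * (∑ k, P k k) * (if i = j then (1:ℝ) else 0)) * a i * b j)
    + (1/2) * ((∑ i, ∑ j, a i * a j * Q i j) + (1/2) * (∑ k, Q k k) * (∑ i, (a i)^2))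
    = ∑ i, ((1/2) * (P i i * (∑ j, a j * b j) + a i * ∑ j, (P i j * b j + a j * Q i j))
        + (1/4) * ((∑ j, 2 * a j * P i j) * b i + (∑ j, (a j)^2) * Q i i)) := by
  simp only [mul_ite, mul_one, mul_zero, ite_mul, zero_mul, add_mul, mul_add,
    Finset.sum_add_distrib, Finset.sum_ite_eq, Finset.mem_univ, if_true,
    Finset.mul_sum, Finset.sum_mul]
  simp only [← Finset.sum_add_distrib]
  exact double_sum_swap_trick _ _ (fun i j => by ring)

theorem fderiv_F_val (n : ℕ)
    (Y V : EuclideanSpace ℝ (Fin n) → EuclideanSpace ℝ (Fin n))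
    (hY : ContDiff ℝ 1 Y) (hV : ContDiff ℝ 1 V) (i : Fin n)
    (x : EuclideanSpace ℝ (Fin n)) :
    fderiv ℝ (fun y => (1/2 : ℝ) * (Y y i * ∑ j, Y y j * V y j)
        + (1/4 : ℝ) * ((∑ j, Y y j * Y y j) * V y i)) x (EuclideanSpace.single i 1)
    = (1/2) * (Y x i * (∑ j, (Y x j * vpd n V i j x + V x j * vpd n Y i j x))
          + (∑ j, Y x j * V x j) * vpd n Y i i x)
      + (1/4) * ((∑ j, Y x j * Y x j) * vpd n V i i x
          + V x i * (∑ j, (Y x j * vpd n Y i j x + Y x j * vpd n Y i j x))) := by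
  have dY : ∀ j, DifferentiableAt ℝ (fun y : EuclideanSpace ℝ (Fin n) => Y y j) x := by
    intro j
    exact (((EuclideanSpace.proj j).contDiff.comp hY).differentiable one_ne_zero).differentiableAt
  have dV : ∀ j, DifferentiableAt ℝ (fun y : EuclideanSpace ℝ (Fin n) => V y j) x := by
    intro j
    exact (((EuclideanSpace.proj j).contDiff.comp hV).differentiable one_ne_zero).differentiableAt
  have hS : HasFDerivAt (fun y : EuclideanSpace ℝ (Fin n) => ∑ j, Y y j * V y j)
      (∑ j, (Y x j • fderiv ℝ (fun y => V y j) x + V x j • fderiv ℝ (fun y => Y y j) x)) x :=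
    HasFDerivAt.fun_sum fun j _ => (dY j).hasFDerivAt.mul (dV j).hasFDerivAt
  have hT : HasFDerivAt (fun y : EuclideanSpace ℝ (Fin n) => ∑ j, Y y j * Y y j)
      (∑ j, (Y x j • fderiv ℝ (fun y => Y y j) x + Y x j • fderiv ℝ (fun y => Y y j) x)) x :=
    HasFDerivAt.fun_sum fun j _ => (dY j).hasFDerivAt.mul (dY j).hasFDerivAt
  have hF : HasFDerivAt (fun y : EuclideanSpace ℝ (Fin n) =>
      (1/2 : ℝ) * (Y y i * ∑ j, Y y j * V y j) + (1/4 : ℝ) * ((∑ j, Y y j * Y y j) * V y i))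
      ((1/2 : ℝ) • (Y x i • (∑ j, (Y x j • fderiv ℝ (fun y => V y j) x
              + V x j • fderiv ℝ (fun y => Y y j) x))
            + (∑ j, Y x j * V x j) • fderiv ℝ (fun y => Y y i) x)
        + (1/4 : ℝ) • ((∑ j, Y x j * Y x j) • fderiv ℝ (fun y => V y i) x
            + (V x i) • (∑ j, (Y x j • fderiv ℝ (fun y => Y y j) x
              + Y x j • fderiv ℝ (fun y => Y y j) x)))) x :=
    (((dY i).hasFDerivAt.mul hS).const_mul (1/2)).add
      ((hT.mul (dV i).hasFDerivAt).const_mul (1/4))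
  rw [hF.fderiv]
  simp [vpd, ContinuousLinearMap.sum_apply, mul_comm]
  ring

theorem killing_operator_identity (n : ℕ) (hn : 1 ≤ n)
    (Y V : EuclideanSpace ℝ (Fin n) → EuclideanSpace ℝ (Fin n))
    (hY : ContDiff ℝ 1 Y) (hV : ContDiff ℝ 1 V) (hsupp : HasCompactSupport Y) :
    ∫ x : EuclideanSpace ℝ (Fin n),
        ∑ i, ∑ j, (symGrad n Y i j x +
            (1/2) * diverg n Y x * (if i = j then (1:ℝ) else 0)) * Y x i * V x j
      = -(1/2) * ∫ x : EuclideanSpace ℝ (Fin n),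
          ((∑ i, ∑ j, Y x i * Y x j * vpd n V i j x) +
            (1/2) * diverg n V x * (∑ i, (Y x i) ^ 2)) := by
  classical
  set F : Fin n → EuclideanSpace ℝ (Fin n) → ℝ := fun i x =>
    (1/2 : ℝ) * (Y x i * ∑ j, Y x j * V x j)
      + (1/4 : ℝ) * ((∑ j, Y x j * Y x j) * V x i) with hFdef
  have hca : ∀ j, ContDiff ℝ 1 (fun x => Y x j) := by
    intro j; exact (EuclideanSpace.proj j).contDiff.comp hY
  have hcb : ∀ j, ContDiff ℝ 1 (fun x => V x j) := by
    intro j; exact (EuclideanSpace.proj j).contDiff.comp hV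
  have hFc : ∀ i, ContDiff ℝ 1 (F i) := by
    intro i
    exact (contDiff_const.mul ((hca i).mul
        (ContDiff.sum fun j _ => (hca j).mul (hcb j)))).add
      (contDiff_const.mul ((ContDiff.sum fun j _ => (hca j).mul (hca j)).mul (hcb i)))
  have hFsupp : ∀ i, HasCompactSupport (F i) := by
    intro i
    refine HasCompactSupport.intro hsupp fun x hx => ?_
    have hx0 : Y x = 0 := image_eq_zero_of_notMem_tsupport hx
    simp [hFdef, hx0]
  -- continuity of vpd for V
  have hQcont : ∀ i j, Continuous (fun x => vpd n V i j x) := by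
    intro i j
    exact ((ContinuousLinearMap.apply ℝ ℝ (EuclideanSpace.single i 1)).continuous).comp
      (((hcb j).fderiv_right (m := 0) (le_refl 1)).continuous)
  set B : EuclideanSpace ℝ (Fin n) → ℝ := fun x =>
    (∑ i, ∑ j, Y x i * Y x j * vpd n V i j x) +
      (1/2) * diverg n V x * (∑ i, (Y x i) ^ 2) with hBdef
  have hBcont : Continuous B := by
    apply Continuous.add
    · exact continuous_finset_sum _ fun i _ => continuous_finset_sum _ fun j _ =>
        (((hca i).continuous.mul (hca j).continuous).mul (hQcont i j))
    · apply Continuous.mul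
      · apply Continuous.mul continuous_const
        exact continuous_finset_sum _ fun i _ => hQcont i i
      · exact continuous_finset_sum _ fun i _ => ((hca i).continuous.pow 2)
  have hBsupp : HasCompactSupport B := by
    refine HasCompactSupport.intro hsupp fun x hx => ?_
    have hx0 : Y x = 0 := image_eq_zero_of_notMem_tsupport hx
    simp [hBdef, hx0]
  have hBint : Integrable B volume := hBcont.integrable_of_hasCompactSupport hBsupp
  have hDint : Integrable (fun x => ∑ i, fderiv ℝ (F i) x (EuclideanSpace.single i 1)) volume :=
    integrable_finset_sum _ fun i _ =>
      fderiv_integrable n (F i) (hFc i) (hFsupp i) (EuclideanSpace.single i 1)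
  -- pointwise identity
  have hpoint : ∀ x, (∑ i, ∑ j, (symGrad n Y i j x +
        (1/2) * diverg n Y x * (if i = j then (1:ℝ) else 0)) * Y x i * V x j)
      = (∑ i, fderiv ℝ (F i) x (EuclideanSpace.single i 1)) + (-(1/2)) * B x := by
    intro x
    have halg := alg n (fun i j => vpd n Y i j x) (fun i j => vpd n V i j x)
      (fun i => Y x i) (fun i => V x i)
    have hval : ∀ i, fderiv ℝ (F i) x (EuclideanSpace.single i 1)
        = (1/2) * (Y x i * (∑ j, (Y x j * vpd n V i j x + V x j * vpd n Y i j x))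
              + (∑ j, Y x j * V x j) * vpd n Y i i x)
          + (1/4) * ((∑ j, Y x j * Y x j) * vpd n V i i x
              + V x i * (∑ j, (Y x j * vpd n Y i j x + Y x j * vpd n Y i j x))) :=
      fun i => fderiv_F_val n Y V hY hV i x
    simp only [symGrad, diverg, hBdef]
    simp only [symGrad, diverg] at halg
    have hsum : ∑ i, fderiv ℝ (F i) x (EuclideanSpace.single i 1)
        = ∑ i, ((1/2) * ((vpd n Y i i x) * (∑ j, Y x j * V x j)
              + Y x i * ∑ j, ((vpd n Y i j x) * V x j + Y x j * (vpd n V i j x)))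
            + (1/4) * ((∑ j, 2 * Y x j * (vpd n Y i j x)) * V x i
              + (∑ j, (Y x j)^2) * (vpd n V i i x))) := by
      refine Finset.sum_congr rfl fun i _ => ?_
      rw [hval i]
      have e1 : ∑ j, ((vpd n Y i j x) * V x j + Y x j * (vpd n V i j x))
          = ∑ j, (Y x j * vpd n V i j x + V x j * vpd n Y i j x) :=
        Finset.sum_congr rfl fun j _ => by ring
      have e2 : ∑ j, 2 * Y x j * (vpd n Y i j x)
          = ∑ j, (Y x j * vpd n Y i j x + Y x j * vpd n Y i j x) :=
        Finset.sum_congr rfl fun j _ => by ring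
      have e3 : (∑ j, (Y x j)^2) = ∑ j, Y x j * Y x j :=
        Finset.sum_congr rfl fun j _ => by ring
      rw [e1, e2, e3]
      ring
    rw [hsum]
    linarith [halg]
  calc ∫ x : EuclideanSpace ℝ (Fin n),
        ∑ i, ∑ j, (symGrad n Y i j x +
            (1/2) * diverg n Y x * (if i = j then (1:ℝ) else 0)) * Y x i * V x j
      = ∫ x : EuclideanSpace ℝ (Fin n),
          ((∑ i, fderiv ℝ (F i) x (EuclideanSpace.single i 1)) + (-(1/2)) * B x) := by
        exact integral_congr_ae (Filter.Eventually.of_forall hpoint)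
    _ = (∫ x : EuclideanSpace ℝ (Fin n), ∑ i, fderiv ℝ (F i) x (EuclideanSpace.single i 1))
          + ∫ x : EuclideanSpace ℝ (Fin n), (-(1/2)) * B x :=
        integral_add hDint (hBint.const_mul _)
    _ = 0 + (-(1/2)) * ∫ x : EuclideanSpace ℝ (Fin n), B x := by
        rw [integral_finset_sum _ (fun i _ =>
          fderiv_integrable n (F i) (hFc i) (hFsupp i) (EuclideanSpace.single i 1)),
          integral_const_mul]
        congr 1
        exact Finset.sum_eq_zero fun i _ =>
          key_ibp n (F i) (hFc i) (hFsupp i) (EuclideanSpace.single i 1)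
    _ = -(1/2) * ∫ x : EuclideanSpace ℝ (Fin n),
          ((∑ i, ∑ j, Y x i * Y x j * vpd n V i j x) +
            (1/2) * diverg n V x * (∑ i, (Y x i) ^ 2)) := by
        rw [zero_add]
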